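/- There exists a Turyn-type sequence TT(38); explicitly, the quadruple (A;B;C;D) with A = ++++−−+++++−+++−−−+−++−+++++−++−−−−−−+, B = +−+++−−−−++−+−++−−−−−−−−+−−−+++−+−++−+, C = +++−+−+++++−+++−+−−−−+++−+−−+−−+++−++−, D = +−−++−−−++−−++−+−−−−+−+−−−+−++++−+−−+ is a TT(38). -/

import Mathlib

set_option maxRecDepth 100000

/-- A sequence is modeled as a function `ℤ → ℤ`. -/
abbrev BSeq : Type := ℤ → ℤ

/-- A quadruple of sequences. -/
abbrev SeqQuad : Type := BSeq × BSeq × BSeq × BSeq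

/-- A binary (`±1`) sequence of length `n`: supported on `[1, n]`,
with values in `{1, -1}` there, and `0` outside. -/
def IsBinarySeq (n : ℕ) (a : BSeq) : Prop :=
  (∀ i : ℤ, 1 ≤ i → i ≤ (n : ℤ) → a i = 1 ∨ a i = -1) ∧
  (∀ i : ℤ, i < 1 ∨ (n : ℤ) < i → a i = 0)

/-- The nonperiodic autocorrelation function `N_A(i) = Σ_{j ∈ ℤ} a_j a_{i+j}`. -/
noncomputable def NAC (a : BSeq) (i : ℤ) : ℤ := ∑ᶠ j : ℤ, a j * a (i + j)

/-- `(A; B; C; D)` is a Turyn-type sequence `TT(n)`: binary sequences of lengths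
`n, n, n, n-1` with `N_A(i) + N_B(i) + 2N_C(i) + 2N_D(i) = 0` for all `i ≠ 0`. -/
def IsTT (n : ℕ) (A B C D : BSeq) : Prop :=
  IsBinarySeq n A ∧ IsBinarySeq n B ∧ IsBinarySeq n C ∧ IsBinarySeq (n - 1) D ∧
  ∀ i : ℤ, i ≠ 0 → NAC A i + NAC B i + 2 * NAC C i + 2 * NAC D i = 0

/-- The sequence determined by a list, with `l.get (i-1)` in position `i` for
`1 ≤ i ≤ l.length` and `0` elsewhere. -/
def seqOfList (l : List ℤ) : BSeq := fun i => if 1 ≤ i then l.getD (i - 1).toNat 0 else 0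

/-! ### Auxiliary material -/

def lA : List ℤ := [1, 1, 1, 1, -1, -1, 1, 1, 1, 1, 1, -1, 1, 1, 1, -1, -1, -1, 1, -1, 1, 1, -1, 1, 1, 1, 1, 1, -1, 1, 1, -1, -1, -1, -1, -1, -1, 1]
def lB : List ℤ := [1, -1, 1, 1, 1, -1, -1, -1, -1, 1, 1, -1, 1, -1, 1, 1, -1, -1, -1, -1, -1, -1, -1, -1, 1, -1, -1, -1, 1, 1, 1, -1, 1, -1, 1, 1, -1, 1]
def lC : List ℤ := [1, 1, 1, -1, 1, -1, 1, 1, 1, 1, 1, -1, 1, 1, 1, -1, 1, -1, -1, -1, -1, 1, 1, 1, -1, 1, -1, -1, 1, -1, -1, 1, 1, 1, -1, 1, 1, -1]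
def lD : List ℤ := [1, -1, -1, 1, 1, -1, -1, -1, 1, 1, -1, -1, 1, 1, -1, 1, -1, -1, -1, -1, 1, -1, 1, -1, -1, -1, 1, -1, 1, 1, 1, 1, -1, 1, -1, -1, 1]

noncomputable def corr (l : List ℤ) (i : ℤ) : ℤ := ∑ j ∈ Finset.Icc (1:ℤ) 38, seqOfList l j * seqOfList l (i + j)

lemma seqOfList_zero (l : List ℤ) (n : ℤ) (hl : (l.length : ℤ) ≤ n) (i : ℤ)
    (hi : i < 1 ∨ n < i) : seqOfList l i = 0 := by
  unfold seqOfList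
  split
  · apply List.getD_eq_default
    omega
  · rfl

lemma isBinarySeq_seqOfList (l : List ℤ) (hl : ∀ x ∈ l, x = 1 ∨ x = -1) :
    IsBinarySeq l.length (seqOfList l) := by
  constructor
  · intro i h1 h2
    have hlt : (i - 1).toNat < l.length := by omega
    rw [seqOfList, if_pos h1, List.getD_eq_getElem l 0 hlt]
    exact hl _ (List.getElem_mem hlt)
  · intro i hi
    exact seqOfList_zero l _ le_rfl i hi

lemma nac_eq (a : BSeq) (n : ℤ) (h0 : ∀ i : ℤ, i < 1 ∨ n < i → a i = 0) (i : ℤ) :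
    NAC a i = ∑ j ∈ Finset.Icc (1:ℤ) n, a j * a (i + j) := by
  apply finsum_eq_finset_sum_of_support_subset
  intro j hj
  simp only [Function.mem_support] at hj
  simp only [Finset.coe_Icc, Set.mem_Icc]
  by_contra hc
  rw [not_and_or, not_le, not_le] at hc
  rw [h0 j hc, zero_mul] at hj
  exact hj rfl

lemma nac_zero (a : BSeq) (n : ℤ) (h0 : ∀ i : ℤ, i < 1 ∨ n < i → a i = 0) (i : ℤ)
    (hi : n ≤ i ∨ i ≤ -n) : NAC a i = 0 := by
  rw [nac_eq a n h0]
  apply Finset.sum_eq_zero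
  intro j hj
  simp only [Finset.mem_Icc] at hj
  rcases hi with h | h
  · rw [h0 (i + j) (Or.inr (by omega)), mul_zero]
  · rw [h0 (i + j) (Or.inl (by omega)), mul_zero]

/-- An explicit Turyn-type sequence `TT(38)`. -/
theorem exists_TT38 :
    IsTT 38
      (seqOfList [1, 1, 1, 1, -1, -1, 1, 1, 1, 1, 1, -1, 1, 1, 1, -1, -1, -1, 1, -1, 1, 1, -1, 1, 1, 1, 1, 1, -1, 1, 1, -1, -1, -1, -1, -1, -1, 1])
      (seqOfList [1, -1, 1, 1, 1, -1, -1, -1, -1, 1, 1, -1, 1, -1, 1, 1, -1, -1, -1, -1, -1, -1, -1, -1, 1, -1, -1, -1, 1, 1, 1, -1, 1, -1, 1, 1, -1, 1])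
      (seqOfList [1, 1, 1, -1, 1, -1, 1, 1, 1, 1, 1, -1, 1, 1, 1, -1, 1, -1, -1, -1, -1, 1, 1, 1, -1, 1, -1, -1, 1, -1, -1, 1, 1, 1, -1, 1, 1, -1])
      (seqOfList [1, -1, -1, 1, 1, -1, -1, -1, 1, 1, -1, -1, 1, 1, -1, 1, -1, -1, -1, -1, 1, -1, 1, -1, -1, -1, 1, -1, 1, 1, 1, 1, -1, 1, -1, -1, 1]) := by
  show IsTT 38 (seqOfList lA) (seqOfList lB) (seqOfList lC) (seqOfList lD)
  have hA0 : ∀ i : ℤ, i < 1 ∨ (38:ℤ) < i → seqOfList lA i = 0 :=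
    seqOfList_zero lA 38 (by norm_num [lA])
  have hB0 : ∀ i : ℤ, i < 1 ∨ (38:ℤ) < i → seqOfList lB i = 0 :=
    seqOfList_zero lB 38 (by norm_num [lB])
  have hC0 : ∀ i : ℤ, i < 1 ∨ (38:ℤ) < i → seqOfList lC i = 0 :=
    seqOfList_zero lC 38 (by norm_num [lC])
  have hD0 : ∀ i : ℤ, i < 1 ∨ (38:ℤ) < i → seqOfList lD i = 0 :=
    seqOfList_zero lD 38 (by norm_num [lD])
  have main : ∀ i ∈ Finset.Icc (-37:ℤ) 37, i ≠ 0 →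
      corr lA i + corr lB i + 2 * corr lC i + 2 * corr lD i = 0 := by decide
  refine ⟨isBinarySeq_seqOfList lA (by decide), isBinarySeq_seqOfList lB (by decide),
    isBinarySeq_seqOfList lC (by decide), isBinarySeq_seqOfList lD (by decide), ?_⟩
  intro i hi
  by_cases h1 : (38:ℤ) ≤ i ∨ i ≤ -38
  · rw [nac_zero _ 38 hA0 i h1, nac_zero _ 38 hB0 i h1, nac_zero _ 38 hC0 i h1,
      nac_zero _ 38 hD0 i h1]
    ring
  · push_neg at h1
    rw [nac_eq _ 38 hA0, nac_eq _ 38 hB0, nac_eq _ 38 hC0, nac_eq _ 38 hD0]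
    exact main i (Finset.mem_Icc.mpr ⟨by omega, by omega⟩) hi
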